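/- The correspondences of the previous two constructions are mutually inverse. Precisely: (1) if (A, +, ·, 0, 1) is a unitary ring in which 2 = 1+1 has a multiplicative inverse 2⁻¹, and p(a,b,c) = a + b·c − b·a is the associated mobi algebra structure (A, p, 0, 2⁻¹, 1), then the ring recovered from it by a ·' b = p(0,a,b) and a +' b = 2 · p(a, 2⁻¹, b) coincides with the original ring: a·'b = a·b and a+'b = a+b for all a, b ∈ A; (2) if (A, p, 0, ½, 1) is a mobi algebra containing an element 2 with 2·½ = 1 = ½·2 (where a·b = p(0,a,b)), and (A, +, ·, 0, 1) is the associated unitary ring with a+b = 2·p(a,½,b), then the mobi algebra recovered from this ring by p'(a,b,c) = a + b·c − b·a coincides with the original: p'(a,b,c) = p(a,b,c) for all a, b, c ∈ A. -/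
import Mathlib


/-- A mobi algebra: a set with a ternary operation `p` and constants `e0`, `half`, `e1`. -/
structure MobiAlgebra (A : Type*) where
  p : A → A → A → A
  e0 : A
  half : A
  e1 : A
  A1 : p e1 half e0 = half
  A2 : ∀ a, p e0 a e1 = a
  A3 : ∀ a b, p a b a = a
  A4 : ∀ a b, p a e0 b = a
  A5 : ∀ a b, p a e1 b = b
  A6 : ∀ a a' b, p a half b = p a' half b → a = a'
  A7 : ∀ a b c1 c2 c3, p a (p c1 c2 c3) b = p (p a c1 b) c2 (p a c3 b)
  A8 : ∀ a1 a2 b1 b2 c,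
    p (p a1 c b1) half (p a2 c b2) = p (p a1 half a2) c (p b1 half b2)

/-- A unitary (possibly noncommutative) ring structure, given by its data
and the usual axioms (R1)-(R7). -/
structure UnitaryRing (R : Type*) where
  add : R → R → R
  mul : R → R → R
  zero : R
  one : R
  add_assoc : ∀ a b c, add (add a b) c = add a (add b c)
  add_comm : ∀ a b, add a b = add b a
  add_zero : ∀ a, add a zero = a
  exists_neg : ∀ a, ∃ b, add b a = zero
  mul_assoc : ∀ a b c, mul a (mul b c) = mul (mul a b) c
  mul_one : ∀ a, mul a one = a
  one_mul : ∀ a, mul one a = a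
  left_distrib : ∀ a b c, mul a (add b c) = add (mul a b) (mul a c)
  right_distrib : ∀ a b c, mul (add a b) c = add (mul a c) (mul b c)

/-- Theorem 7.3 (the two constructions are mutually inverse):
(1) starting from a unitary ring A in which 2 = 1+1 has a two-sided inverse
h2, forming the mobi operation p(a,b,c) = a + b·c - b·a and recovering a
ring by a·'b = p(0,a,b) and a+'b = p(0, 1+1, p(a,h2,b)) gives back the
original ring operations;
(2) starting from a mobi algebra B with an element 2 that is a two-sided
inverse of ½ (for a·b = p(0,a,b)), and a unitary ring structure R on B with
a+b = 2·p(a,½,b), a·b = p(0,a,b), zero = 0, one = 1, the mobi operation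
recovered from R by p'(a,b,c) = a + b·c - b·a coincides with p. -/
theorem mobi_ring_mutually_inverse
    {A : Type*} [Ring A] (h2 : A)
    (h2l : (1 + 1) * h2 = 1) (h2r : h2 * (1 + 1) = 1)
    {B : Type*} (M : MobiAlgebra B) (two : B)
    (htl : M.p M.e0 two M.half = M.e1) (htr : M.p M.e0 M.half two = M.e1)
    (R : UnitaryRing B)
    (hadd : ∀ a b, R.add a b = M.p M.e0 two (M.p a M.half b))
    (hmul : ∀ a b, R.mul a b = M.p M.e0 a b)
    (hzero : R.zero = M.e0) (hone : R.one = M.e1) :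
    (∀ a b : A,
      ((0:A) + a * b - a * 0 = a * b) ∧
      ((0:A) + (1 + 1) * (a + h2 * b - h2 * a) - (1 + 1) * 0 = a + b)) ∧
    (∀ a b c n : B, R.add n (R.mul b a) = R.zero →
      R.add (R.add a (R.mul b c)) n = M.p a b c) := by
  constructor
  · intro a b
    constructor
    · simp
    · have hb : (1+1)*(h2*b) = b := by rw [← mul_assoc, h2l, one_mul]
      have ha : (1+1)*(h2*a) = a := by rw [← mul_assoc, h2l, one_mul]
      rw [mul_zero, sub_zero, zero_add, mul_sub, mul_add, hb, ha, add_mul, one_mul]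
      abel
  · intro a b c n hn
    -- half-commutativity: p a ½ b = p b ½ a
    have hcomm : ∀ x y : B, M.p x M.half y = M.p y M.half x := by
      intro x y
      have h := M.A7 x y M.e1 M.half M.e0
      rw [M.A1, M.A5, M.A4] at h
      exact h
    -- key: p a b c + b·a = a + b·c
    have key : R.add (M.p a b c) (R.mul b a) = R.add a (R.mul b c) := by
      rw [hadd, hadd, hmul, hmul]
      have l1 := M.A8 a M.e0 c a b
      have l2 := M.A8 a M.e0 a c b
      rw [M.A3 a b] at l2
      rw [l1]
      conv_rhs => rw [l2]
      rw [hcomm c a]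
    have hn' : R.add (R.mul b a) n = R.zero := by rw [R.add_comm]; exact hn
    calc R.add (R.add a (R.mul b c)) n
        = R.add (R.add (M.p a b c) (R.mul b a)) n := by rw [key]
      _ = R.add (M.p a b c) (R.add (R.mul b a) n) := R.add_assoc _ _ _
      _ = R.add (M.p a b c) R.zero := by rw [hn']
      _ = M.p a b c := R.add_zero _
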